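/- Let C be a triangulated category and 𝒳 an extension-closed full additive subcategory closed under isomorphisms. Suppose f: X_C → C is a right minimal right 𝒳-approximation of an object C, and complete f to a distinguished triangle X_C → C → Y → ΣX_C. Then Hom(X', Y) = 0 for every X' ∈ 𝒳. Consequently, if every object of C admits a right minimal right 𝒳-approximation, then (𝒳, 𝒳^⊥) is a torsion pair in C. -/

import Mathlib

open CategoryTheory Category Limits Pretriangulated ZeroObject

variable {C : Type*} [Category C] [Preadditive C] [HasZeroObject C]
  [HasShift C ℤ] [∀ n : ℤ, (shiftFunctor C n).Additive] [Pretriangulated C]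
  [IsTriangulated C] [HasBinaryBiproducts C]

/-- `f : A ⟶ B` is a right `X`-approximation of `B`. -/
def IsRightApprox (X : Set C) {A B : C} (f : A ⟶ B) : Prop :=
  A ∈ X ∧ ∀ A' : C, A' ∈ X → ∀ g : A' ⟶ B, ∃ h : A' ⟶ A, h ≫ f = g

/-- `X` is extension closed: for every distinguished triangle `A ⟶ B ⟶ Z ⟶ ΣA`
with `A, Z ∈ X`, one has `B ∈ X`. -/
def ExtensionClosed (X : Set C) : Prop :=
  ∀ ⦃A B Z : C⦄ (f : A ⟶ B) (g : B ⟶ Z) (h : Z ⟶ A⟦(1 : ℤ)⟧),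
    (Triangle.mk f g h ∈ distTriang C) → A ∈ X → Z ∈ X → B ∈ X

/-- `(X, Y)` is a torsion pair: `Hom(X, Y) = 0` and every object sits in a
distinguished triangle `A ⟶ Z ⟶ B ⟶ ΣA` with `A ∈ X`, `B ∈ Y`. -/
def TorsionPair (X Y : Set C) : Prop :=
  (∀ a ∈ X, ∀ b ∈ Y, ∀ f : a ⟶ b, f = 0) ∧
  ∀ Z : C, ∃ (A B : C) (_ : A ∈ X) (_ : B ∈ Y) (f : A ⟶ Z) (g : Z ⟶ B)
    (h : B ⟶ A⟦(1 : ℤ)⟧), Triangle.mk f g h ∈ distTriang C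

/-- Wakamatsu-type lemma: if `f : A ⟶ Cobj` is a right minimal right
`X`-approximation with cone `Y`, then `Hom(X', Y) = 0` for all `X' ∈ X`; consequently,
if every object admits a right minimal right `X`-approximation, then `(X, X^⊥)` is
a torsion pair. -/
theorem stmt1 (X : Set C)
    (hXiso : ∀ ⦃A B : C⦄, (A ≅ B) → A ∈ X → B ∈ X)
    (hX0 : (0 : C) ∈ X)
    (hXadd : ∀ A B : C, A ∈ X → B ∈ X → (A ⊞ B) ∈ X)
    (hext : ExtensionClosed X) :
    (∀ (Cobj A Y : C) (f : A ⟶ Cobj) (g : Cobj ⟶ Y) (h : Y ⟶ A⟦(1 : ℤ)⟧),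
        IsRightApprox X f → (∀ e : A ⟶ A, e ≫ f = f → IsIso e) →
        (Triangle.mk f g h ∈ distTriang C) →
        ∀ X' ∈ X, ∀ u : X' ⟶ Y, u = 0) ∧
    ((∀ Cobj : C, ∃ (A : C) (f : A ⟶ Cobj), IsRightApprox X f ∧
        ∀ e : A ⟶ A, e ≫ f = f → IsIso e) →
      TorsionPair X {N : C | ∀ a ∈ X, ∀ f : a ⟶ N, f = 0}) := by
  have key : ∀ (Cobj A Y : C) (f : A ⟶ Cobj) (g : Cobj ⟶ Y) (h : Y ⟶ A⟦(1 : ℤ)⟧),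
      IsRightApprox X f → (∀ e : A ⟶ A, e ≫ f = f → IsIso e) →
      (Triangle.mk f g h ∈ distTriang C) →
      ∀ X' ∈ X, ∀ u : X' ⟶ Y, u = 0 := by
    intro Cobj A Y f g h happ hmin hT X' hX' u
    -- complete u ≫ h to a distinguished triangle A → E → X' → A⟦1⟧
    obtain ⟨E, i, p, hT'⟩ := distinguished_cocone_triangle₂ (u ≫ h)
    -- E is in X by extension closure
    have hE : E ∈ X := hext i p (u ≫ h) hT' happ.1 hX'
    -- complete (𝟙 A, u) to a morphism of triangles, getting v : E ⟶ Cobj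
    obtain ⟨v, hv₁, hv₂⟩ := complete_distinguished_triangle_morphism₂
      (Triangle.mk i p (u ≫ h)) (Triangle.mk f g h) hT' hT (𝟙 A) u (by show (u ≫ h) ≫ (shiftFunctor C (1 : ℤ)).map (𝟙 A) = u ≫ h; rw [CategoryTheory.Functor.map_id, comp_id])
    change i ≫ v = 𝟙 A ≫ f at hv₁
    rw [id_comp] at hv₁
    -- factor v through f
    obtain ⟨w, hw⟩ := happ.2 E hE v
    have hiso : IsIso (i ≫ w) := hmin _ (by rw [assoc]; exact (congrArg (i ≫ ·) hw).trans hv₁)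
    -- show u ≫ h = 0
    have hz : (u ≫ h) ≫ (i ≫ w)⟦(1 : ℤ)⟧' = 0 := by
      have h0 := comp_distTriang_mor_zero₂₃ _ (rot_of_distTriang _ hT')
      change (u ≫ h) ≫ (-((shiftFunctor C (1 : ℤ)).map i)) = 0 at h0
      rw [Preadditive.comp_neg, neg_eq_zero] at h0
      rw [Functor.map_comp, ← assoc, h0, zero_comp]
    have huh : u ≫ h = 0 := by
      have : IsIso ((i ≫ w)⟦(1 : ℤ)⟧') := inferInstance
      rw [← cancel_mono ((i ≫ w)⟦(1 : ℤ)⟧'), hz, zero_comp]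
    -- factor u through g
    obtain ⟨t, ht⟩ := Triangle.coyoneda_exact₂ _ (rot_of_distTriang _ hT) u huh
    change u = t ≫ g at ht
    -- factor t through f and conclude
    obtain ⟨s, hs⟩ := happ.2 X' hX' t
    have h12 : f ≫ g = 0 := comp_distTriang_mor_zero₁₂ _ hT
    rw [ht, ← hs]; exact (assoc s f g).trans (by rw [h12, comp_zero])
  refine ⟨key, fun hall => ⟨fun a _ b hb f => hb a ‹a ∈ X› f, fun Z => ?_⟩⟩
  obtain ⟨A, f, happ, hmin⟩ := hall Z
  obtain ⟨Y, g, h, hT⟩ := distinguished_cocone_triangle f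
  exact ⟨A, Y, happ.1, fun a ha u => key Z A Y f g h happ hmin hT a ha u, f, g, h, hT⟩
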